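/- Let A = ρĀ with Ā symmetric stochastic, 0 < ρ < 1. Define E = (I − A²) A Σ_{i=0}^∞ A^i Σ̄ A^i, where all entries of Σ̄ lie in [s_min, s_max]. Then the oscillation of the entries of E satisfies Osc(E) ≤ (ρ(1+ρ²)/(1−ρ²)) (s_max − s_min), where Osc of a matrix is the difference between its maximum and minimum entries. -/

import Mathlib

set_option maxHeartbeats 1600000


open Matrix

/-- Oscillation of a matrix: maximum entry minus minimum entry. -/
noncomputable def oscM {N : ℕ} [NeZero N] (M : Matrix (Fin N) (Fin N) ℝ) : ℝ :=
  (⨆ p : Fin N × Fin N, M p.1 p.2) - ⨅ p : Fin N × Fin N, M p.1 p.2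

/-- If `B` has nonnegative entries with row sums `c`, and the entries of `S` lie in
`[m, M]`, then the entries of `B * S` lie in `[c*m, c*M]`. -/
lemma mul_entry_bounds {N : ℕ} (B S : Matrix (Fin N) (Fin N) ℝ)
    (hB0 : ∀ i j, 0 ≤ B i j) (c : ℝ) (hBrow : ∀ i, ∑ j, B i j = c)
    (m M : ℝ) (hSb : ∀ i j, m ≤ S i j ∧ S i j ≤ M) (p q : Fin N) :
    c * m ≤ (B * S) p q ∧ (B * S) p q ≤ c * M := by
  have h1 : (B * S) p q = ∑ j, B p j * S j q := Matrix.mul_apply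
  constructor
  · calc c * m = ∑ j, B p j * m := by rw [← Finset.sum_mul, hBrow p]
    _ ≤ ∑ j, B p j * S j q :=
        Finset.sum_le_sum fun j _ => mul_le_mul_of_nonneg_left (hSb j q).1 (hB0 p j)
    _ = (B * S) p q := h1.symm
  · calc (B * S) p q = ∑ j, B p j * S j q := h1
    _ ≤ ∑ j, B p j * M :=
        Finset.sum_le_sum fun j _ => mul_le_mul_of_nonneg_left (hSb j q).2 (hB0 p j)
    _ = c * M := by rw [← Finset.sum_mul, hBrow p]

theorem oscM_error_bound {N : ℕ} [NeZero N]
    (Abar : Matrix (Fin N) (Fin N) ℝ)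
    (hnonneg : ∀ i j, 0 ≤ Abar i j)
    (hsymm : Abar.IsSymm)
    (hstoch : ∀ i, ∑ j, Abar i j = 1)
    (ρ : ℝ) (hρ0 : 0 < ρ) (hρ1 : ρ < 1)
    (A : Matrix (Fin N) (Fin N) ℝ) (hA : A = ρ • Abar)
    (Sbar : Matrix (Fin N) (Fin N) ℝ) (smin smax : ℝ)
    (hS : ∀ i j, smin ≤ Sbar i j ∧ Sbar i j ≤ smax)
    (E : Matrix (Fin N) (Fin N) ℝ)
    (hE : E = (1 - A ^ 2) * A * ∑' k : ℕ, A ^ k * Sbar * A ^ k) :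
    oscM E ≤ ρ * (1 + ρ ^ 2) / (1 - ρ ^ 2) * (smax - smin) := by
  have hN : Nonempty (Fin N) := Fin.pos_iff_nonempty.mp (Nat.pos_of_ne_zero (NeZero.ne N))
  -- basic facts about A
  have hA0 : ∀ i j, 0 ≤ A i j := fun i j => by
    rw [hA]; exact mul_nonneg hρ0.le (hnonneg i j)
  have hArow : ∀ i, ∑ j, A i j = ρ := fun i => by
    simp only [hA, Matrix.smul_apply, smul_eq_mul, ← Finset.mul_sum, hstoch i, mul_one]
  have hAsymm : Aᵀ = A := by
    rw [hA, Matrix.transpose_smul, hsymm]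
  -- facts about powers of A
  have hpow : ∀ k : ℕ, (∀ i j, 0 ≤ (A ^ k) i j) ∧ (∀ i, ∑ j, (A ^ k) i j = ρ ^ k) := by
    intro k
    induction k with
    | zero =>
      constructor
      · intro i j
        simp only [pow_zero, Matrix.one_apply]
        split <;> norm_num
      · intro i
        simp [pow_zero, Matrix.one_apply]
    | succ n ih =>
      constructor
      · intro i j
        rw [pow_succ, Matrix.mul_apply]
        exact Finset.sum_nonneg fun l _ => mul_nonneg (ih.1 i l) (hA0 l j)
      · intro i
        rw [pow_succ]
        calc ∑ j, (A ^ n * A) i j = ∑ j, ∑ l, (A ^ n) i l * A l j := by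
              simp [Matrix.mul_apply]
          _ = ∑ l, (A ^ n) i l * (∑ j, A l j) := by
              rw [Finset.sum_comm]; simp [Finset.mul_sum]
          _ = ∑ l, (A ^ n) i l * ρ := by simp_rw [hArow]
          _ = ρ ^ n * ρ := by rw [← Finset.sum_mul, ih.2 i]
  have hpowsymm : ∀ k : ℕ, (A ^ k)ᵀ = A ^ k := fun k => by
    rw [Matrix.transpose_pow, hAsymm]
  have hpowcol : ∀ (k : ℕ) (j : Fin N), ∑ i, (A ^ k) i j = ρ ^ k := by
    intro k j
    have := (hpow k).2 j
    calc ∑ i, (A ^ k) i j = ∑ i, (A ^ k)ᵀ j i := by simp [Matrix.transpose_apply]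
      _ = ∑ i, (A ^ k) j i := by rw [hpowsymm]
      _ = ρ ^ k := this
  set r : ℝ := ρ ^ 2 with hrdef
  have hr0 : 0 ≤ r := sq_nonneg ρ
  have hr1 : r < 1 := by nlinarith
  have hr1' : 0 < 1 - r := by linarith
  -- entrywise bounds on the summands
  have hterm : ∀ (k : ℕ) (p q : Fin N),
      smin * r ^ k ≤ (A ^ k * Sbar * A ^ k) p q ∧
      (A ^ k * Sbar * A ^ k) p q ≤ smax * r ^ k := by
    intro k p q
    -- first: entries of A^k * Sbar lie in [ρ^k smin, ρ^k smax]
    have h1 := mul_entry_bounds (A ^ k) Sbar (hpow k).1 (ρ ^ k) (hpow k).2 smin smax hS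
    -- now multiply on the right by A^k
    have key : (A ^ k * Sbar * A ^ k) p q = ∑ b, (A ^ k * Sbar) p b * (A ^ k) b q :=
      Matrix.mul_apply
    have hrk : r ^ k = ρ ^ k * ρ ^ k := by
      rw [hrdef, ← pow_mul, two_mul, pow_add]
    constructor
    · calc smin * r ^ k = ∑ b, (ρ ^ k * smin) * (A ^ k) b q := by
            rw [← Finset.mul_sum, hpowcol k q, hrk]; ring
        _ ≤ ∑ b, (A ^ k * Sbar) p b * (A ^ k) b q :=
            Finset.sum_le_sum fun b _ =>
              mul_le_mul_of_nonneg_right (h1 p b).1 ((hpow k).1 b q)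
        _ = (A ^ k * Sbar * A ^ k) p q := key.symm
    · calc (A ^ k * Sbar * A ^ k) p q = ∑ b, (A ^ k * Sbar) p b * (A ^ k) b q := key
        _ ≤ ∑ b, (ρ ^ k * smax) * (A ^ k) b q :=
            Finset.sum_le_sum fun b _ =>
              mul_le_mul_of_nonneg_right (h1 p b).2 ((hpow k).1 b q)
        _ = smax * r ^ k := by rw [← Finset.mul_sum, hpowcol k q, hrk]; ring
  -- summability
  have hgeom : Summable fun k : ℕ => r ^ k := summable_geometric_of_lt_one hr0 hr1
  have hsum_entry : ∀ p q : Fin N, Summable fun k : ℕ => (A ^ k * Sbar * A ^ k) p q := by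
    intro p q
    apply Summable.of_abs
    have hle : ∀ k : ℕ, |(A ^ k * Sbar * A ^ k) p q| ≤ (|smin| + |smax|) * r ^ k := by
      intro k
      have h := hterm k p q
      have hrk : 0 ≤ r ^ k := pow_nonneg hr0 k
      rw [abs_le]
      constructor
      · nlinarith [abs_nonneg smin, abs_nonneg smax, neg_abs_le smin, le_abs_self smax]
      · nlinarith [abs_nonneg smin, abs_nonneg smax, neg_abs_le smin, le_abs_self smax]
    exact Summable.of_nonneg_of_le (fun k => abs_nonneg _) hle (hgeom.mul_left _)
  have hhasM : HasSum (fun k : ℕ => A ^ k * Sbar * A ^ k)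
      (Matrix.of fun p q => ∑' k : ℕ, (A ^ k * Sbar * A ^ k) p q) := by
    refine Pi.hasSum.mpr ?_
    intro p
    rw [Pi.hasSum]
    intro q
    exact (hsum_entry p q).hasSum
  set S : Matrix (Fin N) (Fin N) ℝ := ∑' k : ℕ, A ^ k * Sbar * A ^ k with hSdef
  have hSapply : ∀ p q, S p q = ∑' k : ℕ, (A ^ k * Sbar * A ^ k) p q := by
    intro p q
    rw [hSdef, hhasM.tsum_eq]
    rfl
  -- entry bounds for S
  set m : ℝ := smin * (1 - r)⁻¹ with hmdef
  set M : ℝ := smax * (1 - r)⁻¹ with hMdef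
  have hSb : ∀ p q, m ≤ S p q ∧ S p q ≤ M := by
    intro p q
    rw [hSapply p q]
    constructor
    · have : ∑' k : ℕ, smin * r ^ k ≤ ∑' k : ℕ, (A ^ k * Sbar * A ^ k) p q :=
        Summable.tsum_le_tsum (fun k => (hterm k p q).1) (hgeom.mul_left _) (hsum_entry p q)
      rwa [tsum_mul_left, tsum_geometric_of_lt_one hr0 hr1] at this
    · have : ∑' k : ℕ, (A ^ k * Sbar * A ^ k) p q ≤ ∑' k : ℕ, smax * r ^ k :=
        Summable.tsum_le_tsum (fun k => (hterm k p q).2) (hsum_entry p q) (hgeom.mul_left _)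
      rwa [tsum_mul_left, tsum_geometric_of_lt_one hr0 hr1] at this
  -- E = A*S - A^3*S
  have hE' : E = A * S - A ^ 3 * S := by
    rw [hE]
    have : (1 - A ^ 2) * A = A - A ^ 3 := by noncomm_ring
    rw [this, Matrix.sub_mul]
  have hAS := fun p q =>
    mul_entry_bounds A S hA0 ρ hArow m M hSb p q
  have hA3S := fun p q => by
    have h1 : A ^ 3 = A ^ 3 := rfl
    exact mul_entry_bounds (A ^ 3) S (hpow 3).1 (ρ ^ 3) (hpow 3).2 m M hSb p q
  -- entry bounds for E
  have hEupper : ∀ p q, E p q ≤ ρ * M - ρ ^ 3 * m := by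
    intro p q
    have : E p q = (A * S) p q - (A ^ 3 * S) p q := by
      rw [hE']; simp [Matrix.sub_apply]
    rw [this]
    exact sub_le_sub (hAS p q).2 (hA3S p q).1
  have hElower : ∀ p q, ρ * m - ρ ^ 3 * M ≤ E p q := by
    intro p q
    have : E p q = (A * S) p q - (A ^ 3 * S) p q := by
      rw [hE']; simp [Matrix.sub_apply]
    rw [this]
    exact sub_le_sub (hAS p q).1 (hA3S p q).2
  -- conclude
  have hsup : (⨆ p : Fin N × Fin N, E p.1 p.2) ≤ ρ * M - ρ ^ 3 * m :=
    ciSup_le fun p => hEupper p.1 p.2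
  have hinf : ρ * m - ρ ^ 3 * M ≤ ⨅ p : Fin N × Fin N, E p.1 p.2 :=
    le_ciInf fun p => hElower p.1 p.2
  have : oscM E ≤ (ρ * M - ρ ^ 3 * m) - (ρ * m - ρ ^ 3 * M) := by
    unfold oscM
    exact sub_le_sub hsup hinf
  refine this.trans (le_of_eq ?_)
  rw [hmdef, hMdef, hrdef]
  field_simp
  ring
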